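/- Let W be a nonnegative real random variable with continuous CDF F and finite mean, independent of a random variable Z. Fix p₁ ∈ (0,1] and let τ₁ satisfy F(τ₁) = 1 - p₁. For any measurable function P : ℝ → [0,1] with E[P(W)] = p₁, it holds that E[W·P(W)] ≤ p₁·E[W | F(W) ≥ 1 - p₁] = E[W·1{W > τ₁}]. -/

import Mathlib

open MeasureTheory Filter Topology

/-- The threshold rule maximizes E[W·P(W)] subject to E[P(W)] = p₁. -/
theorem stmt16 {Ω : Type*} [MeasurableSpace Ω] (μ : Measure Ω) [IsProbabilityMeasure μ]
    (W : Ω → ℝ) (hWm : Measurable W) (hWnn : ∀ᵐ ω ∂μ, 0 ≤ W ω)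
    (hWint : Integrable W μ)
    (F : ℝ → ℝ) (hF : ∀ t, F t = (μ {ω | W ω ≤ t}).toReal)
    (hFcont : Continuous F)
    (p₁ : ℝ) (hp₁ : p₁ ∈ Set.Ioc (0:ℝ) 1)
    (τ₁ : ℝ) (hτ : F τ₁ = 1 - p₁)
    (P : ℝ → ℝ) (hPm : Measurable P) (hP01 : ∀ w, P w ∈ Set.Icc (0:ℝ) 1)
    (hPexp : ∫ ω, P (W ω) ∂μ = p₁) :
    (∫ ω, W ω * P (W ω) ∂μ ≤
      p₁ * ((∫ ω in {ω | 1 - p₁ ≤ F (W ω)}, W ω ∂μ) /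
        (μ {ω | 1 - p₁ ≤ F (W ω)}).toReal)) ∧
    p₁ * ((∫ ω in {ω | 1 - p₁ ≤ F (W ω)}, W ω ∂μ) /
        (μ {ω | 1 - p₁ ≤ F (W ω)}).toReal)
      = ∫ ω in {ω | τ₁ < W ω}, W ω ∂μ := by
  obtain ⟨hp0, hple⟩ := hp₁
  have hFmono : Monotone F := by
    intro s t hst
    rw [hF, hF]
    exact ENNReal.toReal_mono (measure_ne_top μ _)
      (measure_mono (fun ω h => le_trans h hst))
  have hT : MeasurableSet {ω | τ₁ < W ω} := measurableSet_lt measurable_const hWm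
  have hμT : (μ {ω | τ₁ < W ω}).toReal = p₁ := by
    have h1 : {ω | τ₁ < W ω} = {ω | W ω ≤ τ₁}ᶜ := by ext ω; simp [not_le]
    rw [h1, measure_compl (measurableSet_le hWm measurable_const) (measure_ne_top _ _),
      measure_univ]
    rw [ENNReal.toReal_sub_of_le prob_le_one ENNReal.one_ne_top]
    rw [ENNReal.toReal_one, ← hF, hτ]; ring
  -- left-continuity: μ {W < a} has toReal F a
  have hWlt : ∀ a : ℝ, (μ {ω | W ω < a}).toReal = F a := by
    intro a
    have hun : {ω | W ω < a} = ⋃ n : ℕ, {ω | W ω ≤ a - 1/(n+1)} := by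
      ext ω
      simp only [Set.mem_setOf_eq, Set.mem_iUnion]
      constructor
      · intro h
        obtain ⟨n, hn⟩ := exists_nat_one_div_lt (show 0 < a - W ω by linarith)
        exact ⟨n, by linarith⟩
      · rintro ⟨n, hn⟩
        have : (0:ℝ) < 1/(n+1) := by positivity
        linarith
    have hmono : Monotone (fun n : ℕ => {ω | W ω ≤ a - 1/(n+1)}) := by
      intro m n hmn ω hω
      have h1 : (1:ℝ)/(n+1) ≤ 1/(m+1) := by
        apply one_div_le_one_div_of_le (by positivity)
        exact_mod_cast by omega
      simp only [Set.mem_setOf_eq] at *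
      linarith
    have htend : Tendsto (fun n : ℕ => μ {ω | W ω ≤ a - 1/(n+1)}) atTop
        (𝓝 (μ {ω | W ω < a})) := by
      rw [hun]
      exact tendsto_measure_iUnion_atTop hmono
    have htendR : Tendsto (fun n : ℕ => (μ {ω | W ω ≤ a - 1/(n+1)}).toReal) atTop
        (𝓝 ((μ {ω | W ω < a}).toReal)) :=
      (ENNReal.tendsto_toReal (measure_ne_top μ _)).comp htend
    have hseq : Tendsto (fun n : ℕ => a - 1/(n+1 : ℝ)) atTop (𝓝 a) := by
      have h1 := tendsto_one_div_add_atTop_nhds_zero_nat (𝕜 := ℝ)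
      have h2 := (tendsto_const_nhds (x := a) (f := atTop)).sub h1
      simpa using h2
    have htendF : Tendsto (fun n : ℕ => F (a - 1/(n+1))) atTop (𝓝 (F a)) :=
      (hFcont.tendsto a).comp hseq
    have heq : (fun n : ℕ => (μ {ω | W ω ≤ a - 1/(n+1)}).toReal)
        = fun n : ℕ => F (a - 1/(n+1)) := by
      funext n; rw [hF]
    rw [heq] at htendR
    exact tendsto_nhds_unique htendR htendF
  -- the difference set is null
  have hnull : μ ({ω | 1 - p₁ ≤ F (W ω)} \ {ω | τ₁ < W ω}) = 0 := by
    have hsub : {ω | 1 - p₁ ≤ F (W ω)} \ {ω | τ₁ < W ω}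
        ⊆ {ω | F (W ω) = F τ₁ ∧ W ω ≤ τ₁} := by
      rintro ω ⟨h1, h2⟩
      simp only [Set.mem_setOf_eq, not_lt] at h1 h2 ⊢
      have hle : F (W ω) ≤ F τ₁ := hFmono h2
      exact ⟨le_antisymm hle (hτ ▸ h1), h2⟩
    apply measure_mono_null hsub
    by_cases hp1 : p₁ = 1
    · have h0 : μ {ω | W ω ≤ τ₁} = 0 := by
        have h1 : (μ {ω | W ω ≤ τ₁}).toReal = 0 := by
          rw [← hF, hτ, hp1]; ring
        exact ((ENNReal.toReal_eq_zero_iff _).mp h1).resolve_right (measure_ne_top μ _)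
      exact measure_mono_null (fun ω h => h.2) h0
    · have hc : 0 < F τ₁ := by
        rw [hτ]
        have : p₁ < 1 := lt_of_le_of_ne hple hp1
        linarith
      set S : Set ℝ := {w | F w = F τ₁ ∧ w ≤ τ₁} with hS
      by_cases hne : S.Nonempty
      · have hbd : ∀ w ∈ S, (0:ℝ) ≤ w := by
          intro w hw
          by_contra hneg
          push_neg at hneg
          have h0 : μ {ω | W ω ≤ w} = 0 := by
            have hsub2 : {ω | W ω ≤ w} ⊆ {ω | ¬ (0 ≤ W ω)} := by
              intro ω h; simp only [Set.mem_setOf_eq, not_le] at *; linarith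
            exact measure_mono_null hsub2 (ae_iff.mp hWnn)
          have hFw : F w = 0 := by rw [hF, h0]; simp
          rw [hw.1] at hFw
          linarith
        have hbdd : BddBelow S := ⟨0, fun w hw => hbd w hw⟩
        set a := sInf S with ha
        obtain ⟨w₀, hw₀⟩ := id hne
        have haτ : a ≤ τ₁ := le_trans (csInf_le hbdd hw₀) hw₀.2
        have hseq : ∀ n : ℕ, ∃ w ∈ S, w < a + 1/(n+1) := by
          intro n
          apply Real.lt_sInf_add_pos hne
          positivity
        choose w hwS hwlt using hseq
        have hwa : Tendsto w atTop (𝓝 a) := by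
          have h1 : Tendsto (fun n : ℕ => a + 1/(n+1 : ℝ)) atTop (𝓝 a) := by
            have h0 := tendsto_one_div_add_atTop_nhds_zero_nat (𝕜 := ℝ)
            have h2 := (tendsto_const_nhds (x := a) (f := atTop)).add h0
            simpa using h2
          exact tendsto_of_tendsto_of_tendsto_of_le_of_le tendsto_const_nhds h1
            (fun n => csInf_le hbdd (hwS n)) (fun n => le_of_lt (hwlt n))
        have hFa : F a = F τ₁ := by
          have h1 : Tendsto (fun n => F (w n)) atTop (𝓝 (F a)) := (hFcont.tendsto a).comp hwa
          have h2 : (fun n => F (w n)) = fun _ => F τ₁ := funext fun n => (hwS n).1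
          rw [h2] at h1
          exact (tendsto_nhds_unique tendsto_const_nhds h1).symm
        have hsub3 : {ω | F (W ω) = F τ₁ ∧ W ω ≤ τ₁} ⊆ {ω | a ≤ W ω ∧ W ω ≤ τ₁} := by
          intro ω h
          exact ⟨csInf_le hbdd ⟨h.1, h.2⟩, h.2⟩
        apply measure_mono_null hsub3
        have hunion : {ω | W ω ≤ τ₁} = {ω | W ω < a} ∪ {ω | a ≤ W ω ∧ W ω ≤ τ₁} := by
          ext ω
          simp only [Set.mem_setOf_eq, Set.mem_union]
          constructor
          · intro h
            rcases lt_or_ge (W ω) a with h' | h'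
            · exact Or.inl h'
            · exact Or.inr ⟨h', h⟩
          · rintro (h | h)
            · linarith
            · exact h.2
        have hdisj : Disjoint {ω | W ω < a} {ω | a ≤ W ω ∧ W ω ≤ τ₁} := by
          rw [Set.disjoint_left]
          intro ω h1 h2
          exact absurd h2.1 (not_le.mpr h1)
        have hmeas : MeasurableSet {ω | a ≤ W ω ∧ W ω ≤ τ₁} := by
          have heq : {ω | a ≤ W ω ∧ W ω ≤ τ₁} = W ⁻¹' Set.Icc a τ₁ := rfl
          rw [heq]; exact hWm measurableSet_Icc
        have hadd : μ {ω | W ω ≤ τ₁} = μ {ω | W ω < a} + μ {ω | a ≤ W ω ∧ W ω ≤ τ₁} := by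
          rw [hunion]; exact measure_union hdisj hmeas
        have htr : (μ {ω | W ω ≤ τ₁}).toReal
            = (μ {ω | W ω < a}).toReal + (μ {ω | a ≤ W ω ∧ W ω ≤ τ₁}).toReal := by
          rw [hadd, ENNReal.toReal_add (measure_ne_top μ _) (measure_ne_top μ _)]
        rw [← hF, hWlt, hFa] at htr
        have hz : (μ {ω | a ≤ W ω ∧ W ω ≤ τ₁}).toReal = 0 := by linarith
        exact ((ENNReal.toReal_eq_zero_iff _).mp hz).resolve_right (measure_ne_top μ _)
      · have hem : {ω | F (W ω) = F τ₁ ∧ W ω ≤ τ₁} = ∅ := by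
          ext ω
          simp only [Set.mem_setOf_eq, Set.mem_empty_iff_false, iff_false]
          intro h
          exact hne ⟨W ω, h.1, h.2⟩
        rw [hem, measure_empty]
  -- the two sets agree a.e.
  have hTsubA : {ω | τ₁ < W ω} ⊆ {ω | 1 - p₁ ≤ F (W ω)} := by
    intro ω h
    have : F τ₁ ≤ F (W ω) := hFmono (le_of_lt h)
    simpa [hτ] using this
  have hAeqT : {ω | 1 - p₁ ≤ F (W ω)} =ᵐ[μ] {ω | τ₁ < W ω} :=
    MeasureTheory.ae_eq_set.mpr ⟨hnull, by rw [Set.diff_eq_empty.mpr hTsubA]; exact measure_empty⟩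
  have hμA : (μ {ω | 1 - p₁ ≤ F (W ω)}).toReal = p₁ := by
    rw [measure_congr hAeqT, hμT]
  have hIA : ∫ ω in {ω | 1 - p₁ ≤ F (W ω)}, W ω ∂μ = ∫ ω in {ω | τ₁ < W ω}, W ω ∂μ :=
    setIntegral_congr_set hAeqT
  have hRHS : p₁ * ((∫ ω in {ω | 1 - p₁ ≤ F (W ω)}, W ω ∂μ) /
      (μ {ω | 1 - p₁ ≤ F (W ω)}).toReal) = ∫ ω in {ω | τ₁ < W ω}, W ω ∂μ := by
    rw [hμA, hIA]
    field_simp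
  refine ⟨?_, hRHS⟩
  rw [hRHS]
  -- main inequality
  set T : Set Ω := {ω | τ₁ < W ω} with hTdef
  set I : Ω → ℝ := T.indicator (fun _ => 1) with hI
  have hPWm : AEStronglyMeasurable (fun ω => P (W ω)) μ :=
    (hPm.comp hWm).aestronglyMeasurable
  have hPWint : Integrable (fun ω => P (W ω)) μ := by
    apply Integrable.mono' (integrable_const (1:ℝ)) hPWm
    filter_upwards with ω
    rw [Real.norm_eq_abs, abs_le]
    constructor <;> [linarith [(hP01 (W ω)).1]; exact (hP01 (W ω)).2]
  have hWPint : Integrable (fun ω => W ω * P (W ω)) μ := by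
    have := hWint.bdd_mul (c := 1) hPWm (Filter.Eventually.of_forall fun ω => by
      rw [Real.norm_eq_abs, abs_le]
      constructor <;> [linarith [(hP01 (W ω)).1]; exact (hP01 (W ω)).2])
    simpa [mul_comm] using this
  have hIint : Integrable I μ := (integrable_const (1:ℝ)).indicator hT
  have hWTint : Integrable (T.indicator W) μ := hWint.indicator hT
  have hWIeq : (fun ω => W ω * I ω) = T.indicator W := by
    funext ω
    by_cases h : ω ∈ T <;>
      simp [hI, Set.indicator_of_mem, Set.indicator_of_notMem, h]
  have hIexp : ∫ ω, I ω ∂μ = p₁ := by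
    rw [hI, integral_indicator_const (1:ℝ) hT]
    simp [measureReal_def, hμT]
  have hpt : ∀ ω, (W ω - τ₁) * (P (W ω) - I ω) ≤ 0 := by
    intro ω
    by_cases h : ω ∈ T
    · have h1 : τ₁ < W ω := h
      have h2 : I ω = 1 := by simp [hI, Set.indicator_of_mem h]
      rw [h2]
      exact mul_nonpos_of_nonneg_of_nonpos (by linarith) (by linarith [(hP01 (W ω)).2])
    · have h1 : ¬ τ₁ < W ω := h
      have h2 : I ω = 0 := by simp [hI, Set.indicator_of_notMem h]
      rw [h2]
      exact mul_nonpos_of_nonpos_of_nonneg (by push_neg at h1; linarith)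
        (by linarith [(hP01 (W ω)).1])
  have hexpand : (fun ω => (W ω - τ₁) * (P (W ω) - I ω))
      = fun ω => (W ω * P (W ω) - T.indicator W ω) - τ₁ * (P (W ω) - I ω) := by
    funext ω
    rw [← hWIeq]
    ring
  have hint1 : Integrable (fun ω => P (W ω) - I ω) μ := hPWint.sub hIint
  have hint2 : Integrable (fun ω => W ω * P (W ω) - T.indicator W ω) μ :=
    hWPint.sub hWTint
  have hint3 : Integrable (fun ω => τ₁ * (P (W ω) - I ω)) μ := hint1.const_mul τ₁
  have hval : ∫ ω, (W ω - τ₁) * (P (W ω) - I ω) ∂μ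
      = (∫ ω, W ω * P (W ω) ∂μ) - ∫ ω in T, W ω ∂μ := by
    rw [hexpand, integral_sub hint2 hint3,
      integral_sub hWPint hWTint, integral_const_mul, integral_sub hPWint hIint,
      hPexp, hIexp, integral_indicator hT]
    ring
  have hle : ∫ ω, (W ω - τ₁) * (P (W ω) - I ω) ∂μ ≤ 0 :=
    integral_nonpos fun ω => hpt ω
  linarith [hval ▸ hle]
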